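/- For all t > 0, ln(sinh(t)/t) < (1/6)t^2. -/

import Mathlib

open Real

lemma aux_sinh_lt (t : ℝ) (ht : 0 < t) : Real.sinh t < t * Real.cosh t := by
  have key : StrictMonoOn (fun x : ℝ => x * Real.cosh x - Real.sinh x) (Set.Ici 0) := by
    apply strictMonoOn_of_deriv_pos (convex_Ici 0)
    · exact (continuous_id.mul Real.continuous_cosh).sub Real.continuous_sinh |>.continuousOn
    · intro x hx
      rw [interior_Ici] at hx
      have hd : HasDerivAt (fun x : ℝ => x * Real.cosh x - Real.sinh x) (x * Real.sinh x) x := by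
        have h1 : HasDerivAt (fun x : ℝ => x * Real.cosh x)
            (1 * Real.cosh x + x * Real.sinh x) x :=
          (hasDerivAt_id x).mul (Real.hasDerivAt_cosh x)
        have := h1.sub (Real.hasDerivAt_sinh x)
        exact this.congr_deriv (by ring)
      rw [hd.deriv]
      exact mul_pos hx (Real.sinh_pos_iff.2 hx)
  have := key (Set.self_mem_Ici) (Set.mem_Ici.2 ht.le) ht
  simpa using this

lemma aux_coth_lt (t : ℝ) (ht : 0 < t) :
    3 * t * Real.cosh t < (3 + t ^ 2) * Real.sinh t := by
  have key : StrictMonoOn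
      (fun x : ℝ => (3 + x ^ 2) * Real.sinh x - 3 * x * Real.cosh x) (Set.Ici 0) := by
    apply strictMonoOn_of_deriv_pos (convex_Ici 0)
    · exact (((continuous_const.add (continuous_pow 2)).mul Real.continuous_sinh).sub
        ((continuous_const.mul continuous_id).mul Real.continuous_cosh)).continuousOn
    · intro x hx
      rw [interior_Ici] at hx
      have hd : HasDerivAt (fun x : ℝ => (3 + x ^ 2) * Real.sinh x - 3 * x * Real.cosh x)
          (x * (x * Real.cosh x - Real.sinh x)) x := by
        have h1 : HasDerivAt (fun x : ℝ => (3 + x ^ 2) * Real.sinh x)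
            ((0 + 2 * x ^ 1) * Real.sinh x + (3 + x ^ 2) * Real.cosh x) x :=
          ((hasDerivAt_const x (3:ℝ)).add (hasDerivAt_pow 2 x)).mul (Real.hasDerivAt_sinh x)
        have h2 : HasDerivAt (fun x : ℝ => 3 * x * Real.cosh x)
            ((3 * 1) * Real.cosh x + 3 * x * Real.sinh x) x := by
          have := ((hasDerivAt_id x).const_mul (3:ℝ)).mul (Real.hasDerivAt_cosh x)
          exact this
        have := h1.sub h2
        exact this.congr_deriv (by ring)
      rw [hd.deriv]
      exact mul_pos hx (sub_pos.2 (aux_sinh_lt x hx))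
  have := key (Set.self_mem_Ici) (Set.mem_Ici.2 ht.le) ht
  simpa using this

lemma aux_F_anti : StrictAntiOn
    (fun x : ℝ => Real.log (Real.sinh x) - Real.log x - x ^ 2 / 6) (Set.Ioi 0) := by
  apply strictAntiOn_of_deriv_neg (convex_Ioi 0)
  · apply ContinuousOn.sub
    apply ContinuousOn.sub
    · exact Real.continuousOn_log.comp Real.continuous_sinh.continuousOn
        (fun x hx => by simp [ne_of_gt (Real.sinh_pos_iff.2 hx)])
    · exact Real.continuousOn_log.mono (by intro x hx; exact ne_of_gt hx)
    · exact (continuous_pow 2).continuousOn.div_const 6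
  · intro x hx
    rw [interior_Ioi] at hx
    have hs : Real.sinh x > 0 := Real.sinh_pos_iff.2 hx
    have hd : HasDerivAt (fun x : ℝ => Real.log (Real.sinh x) - Real.log x - x ^ 2 / 6)
        (Real.cosh x / Real.sinh x - 1 / x - x / 3) x := by
      have h1 : HasDerivAt (fun x : ℝ => Real.log (Real.sinh x))
          (Real.cosh x / Real.sinh x) x :=
        (Real.hasDerivAt_sinh x).log (ne_of_gt hs)
      have h2 : HasDerivAt Real.log (1 / x) x := by
        simpa [one_div] using Real.hasDerivAt_log (ne_of_gt hx)
      have h3 : HasDerivAt (fun x : ℝ => x ^ 2 / 6) (x / 3) x := by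
        have := (hasDerivAt_pow 2 x).div_const (6:ℝ)
        exact this.congr_deriv (by ring)
      exact (h1.sub h2).sub h3
    rw [hd.deriv]
    have key := aux_coth_lt x hx
    have e1 : Real.cosh x / Real.sinh x - 1 / x - x / 3 =
        (3 * x * Real.cosh x - (3 + x ^ 2) * Real.sinh x) / (3 * x * Real.sinh x) := by
      have hx0 : x ≠ 0 := ne_of_gt hx
      have hs0 : Real.sinh x ≠ 0 := ne_of_gt hs
      field_simp
      ring
    rw [e1]
    apply div_neg_of_neg_of_pos
    · linarith
    · have hx' : (0:ℝ) < x := hx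
      exact mul_pos (by linarith) hs

theorem log_sinh_div_lt (t : ℝ) (ht : 0 < t) :
    Real.log (Real.sinh t / t) < (1 / 6) * t ^ 2 := by
  set F : ℝ → ℝ := fun x => Real.log (Real.sinh x) - Real.log x - x ^ 2 / 6 with hF
  have hFle : ∀ s : ℝ, 0 < s → F s ≤ 0 := by
    intro s hs
    have hlim : Filter.Tendsto F (nhdsWithin 0 (Set.Ioi 0)) (nhds 0) := by
      have h1 : Filter.Tendsto (fun x : ℝ => Real.sinh x / x) (nhdsWithin 0 (Set.Ioi 0))
          (nhds 1) := by
        have := (Real.hasDerivAt_sinh 0).tendsto_slope_zero_right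
        simp only [Real.sinh_zero, Real.cosh_zero, sub_zero] at this
        apply this.congr
        intro x
        simp [smul_eq_mul, div_eq_inv_mul]
      have h2 : Filter.Tendsto (fun x : ℝ => Real.log (Real.sinh x / x))
          (nhdsWithin 0 (Set.Ioi 0)) (nhds 0) := by
        have := (Real.continuousAt_log (by norm_num : (1:ℝ) ≠ 0)).tendsto.comp h1
        simpa [Function.comp_def] using this
      have h3 : Filter.Tendsto (fun x : ℝ => x ^ 2 / 6) (nhdsWithin 0 (Set.Ioi 0)) (nhds 0) := by
        have : Filter.Tendsto (fun x : ℝ => x ^ 2 / 6) (nhds 0) (nhds (0 ^ 2 / 6)) :=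
          ((continuous_pow 2).div_const 6).tendsto 0
        simpa using this.mono_left nhdsWithin_le_nhds
      have h4 : Filter.Tendsto (fun x : ℝ => Real.log (Real.sinh x / x) - x ^ 2 / 6)
          (nhdsWithin 0 (Set.Ioi 0)) (nhds 0) := by simpa using h2.sub h3
      apply h4.congr'
      filter_upwards [self_mem_nhdsWithin] with x hx
      have hx' : (0:ℝ) < x := hx
      rw [hF]
      rw [Real.log_div (ne_of_gt (Real.sinh_pos_iff.2 hx')) (ne_of_gt hx')]
    have hev : ∀ᶠ r in nhdsWithin 0 (Set.Ioi 0), F s ≤ F r := by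
      filter_upwards [Ioo_mem_nhdsGT_of_mem (by constructor <;> [rfl; exact hs] :
        (0:ℝ) ∈ Set.Ico 0 s)] with r hr
      exact (aux_F_anti hr.1 hs hr.2).le
    exact ge_of_tendsto hlim hev
  have h1 : F t < F (t / 2) := aux_F_anti (Set.mem_Ioi.2 (by positivity)) (Set.mem_Ioi.2 ht) (by linarith)
  have h2 : F (t / 2) ≤ 0 := hFle _ (by positivity)
  have h3 : F t < 0 := lt_of_lt_of_le h1 h2
  rw [hF] at h3
  simp only at h3
  rw [Real.log_div (ne_of_gt (Real.sinh_pos_iff.2 ht)) (ne_of_gt ht)]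
  linarith
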